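/- The determinant of the 6×6 skew-symmetric matrix K(z,w) with rows/columns indexed 1..6, given by K₁₂ = c₁, K₁₃ = −b₁, K₁₄ = −1, K₂₃ = a₁, K₂₅ = −1/z, K₃₆ = −1/w, K₄₅ = c₂, K₄₆ = −b₂, K₅₆ = a₂ (and K antisymmetric, all other upper entries 0), equals (z+1/z)(ab−c) + (w+1/w)(ac−b) + (z/w+w/z)(bc−a) + a² + b² + c² + 1, where a = a₁a₂, b = b₁b₂, c = c₁c₂. -/

import Mathlib

set_option maxHeartbeats 1000000

theorem stmt_9 (a₁ a₂ b₁ b₂ c₁ c₂ : ℂ) (z w : ℂ) (hz : z ≠ 0) (hw : w ≠ 0) :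
    Matrix.det
        !![0, c₁, -b₁, -1, 0, 0;
           -c₁, 0, a₁, 0, -1 / z, 0;
           b₁, -a₁, 0, 0, 0, -1 / w;
           1, 0, 0, 0, c₂, -b₂;
           0, z, 0, -c₂, 0, a₂;
           0, 0, w, b₂, -a₂, 0] =
      (z + 1 / z) * (a₁ * a₂ * (b₁ * b₂) - c₁ * c₂) +
        (w + 1 / w) * (a₁ * a₂ * (c₁ * c₂) - b₁ * b₂) +
        (z / w + w / z) * (b₁ * b₂ * (c₁ * c₂) - a₁ * a₂) +
        (a₁ * a₂) ^ 2 + (b₁ * b₂) ^ 2 + (c₁ * c₂) ^ 2 + 1 := by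
  set A : Matrix (Fin 3) (Fin 3) ℂ := !![0, c₁, -b₁; -c₁, 0, a₁; b₁, -a₁, 0] with hA
  set B : Matrix (Fin 3) (Fin 3) ℂ := !![-1, 0, 0; 0, -1/z, 0; 0, 0, -1/w] with hB
  set C : Matrix (Fin 3) (Fin 3) ℂ := !![(1:ℂ), 0, 0; 0, z, 0; 0, 0, w] with hC
  set D : Matrix (Fin 3) (Fin 3) ℂ := !![0, c₂, -b₂; -c₂, 0, a₂; b₂, -a₂, 0] with hD
  have hCinv : C * !![(1:ℂ), 0, 0; 0, 1/z, 0; 0, 0, 1/w] = 1 := by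
    ext i j
    fin_cases i <;> fin_cases j <;>
      simp [hC, Matrix.mul_apply, Fin.sum_univ_three, Matrix.one_apply,
        mul_one_div_cancel hz, mul_one_div_cancel hw, mul_inv_cancel₀ hz, mul_inv_cancel₀ hw,
        Matrix.vecHead, Matrix.vecTail]
  haveI : Invertible C := ⟨_, by rw [mul_eq_one_comm] at hCinv; exact hCinv, hCinv⟩
  have hinvC : ⅟C = !![(1:ℂ), 0, 0; 0, 1/z, 0; 0, 0, 1/w] := invOf_eq_right_inv hCinv
  have key : Matrix.det
        !![0, c₁, -b₁, -1, 0, 0;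
           -c₁, 0, a₁, 0, -1 / z, 0;
           b₁, -a₁, 0, 0, 0, -1 / w;
           1, 0, 0, 0, c₂, -b₂;
           0, z, 0, -c₂, 0, a₂;
           0, 0, w, b₂, -a₂, 0]
      = - Matrix.det ((Matrix.fromBlocks C D A B).submatrix
          ⇑(finSumFinEquiv (m := 3) (n := 3)).symm ⇑(finSumFinEquiv (m := 3) (n := 3)).symm) := by
    have hswap : ((Matrix.fromBlocks C D A B).submatrix
          ⇑(finSumFinEquiv (m := 3) (n := 3)).symm ⇑(finSumFinEquiv (m := 3) (n := 3)).symm)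
        = Matrix.submatrix !![0, c₁, -b₁, -1, 0, 0;
           -c₁, 0, a₁, 0, -1 / z, 0;
           b₁, -a₁, 0, 0, 0, -1 / w;
           1, 0, 0, 0, c₂, -b₂;
           0, z, 0, -c₂, 0, a₂;
           0, 0, w, b₂, -a₂, 0]
           ⇑(Equiv.swap 0 3 * Equiv.swap 1 4 * Equiv.swap 2 5 : Equiv.Perm (Fin 6)) id := by
      ext i j
      fin_cases i <;> fin_cases j <;> rfl
    rw [hswap, Matrix.det_permute]
    have hsgn : Equiv.Perm.sign
        (Equiv.swap 0 3 * Equiv.swap 1 4 * Equiv.swap 2 5 : Equiv.Perm (Fin 6)) = -1 := by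
      decide
    rw [hsgn]
    simp
  rw [key, Matrix.det_submatrix_equiv_self, Matrix.det_fromBlocks₁₁]
  have hBE : B - A * ⅟C * D = (1/(z*w)) •
      !![-(z*w) + c₁*c₂*w + b₁*b₂*z, -(a₂*b₁*z), -(a₂*c₁*w);
         -(a₁*b₂*z), -w + c₁*c₂*(z*w) + a₁*a₂*z, -(b₂*c₁*(z*w));
         -(a₁*c₂*w), -(b₁*c₂*(z*w)), -z + b₁*b₂*(z*w) + a₁*a₂*w] := by
    rw [hinvC]
    ext i j
    fin_cases i <;> fin_cases j <;>
      simp [hA, hB, hC, hD, Matrix.mul_apply, Fin.sum_univ_three, Matrix.vecHead,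
        Matrix.vecTail] <;> (try field_simp) <;> (try ring) <;> (try tauto)
  have hdetC : C.det = z * w := by
    rw [hC, Matrix.det_fin_three]; simp
  rw [hBE, hdetC, Matrix.det_smul, Fintype.card_fin, Matrix.det_fin_three]
  simp only [Matrix.of_apply, Matrix.cons_val', Matrix.cons_val_zero, Matrix.cons_val_one,
    Matrix.cons_val_two, Matrix.empty_val', Matrix.cons_val_fin_one, Matrix.head_cons, Matrix.tail_cons,
    Matrix.cons_val_succ, Function.comp_apply, Matrix.vecHead]
  field_simp
  ring
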